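/- Let K be a simplicial complex on Fin n, σ a permutation of Fin n, and d ≥ 1. Then the boundary maps of K and of the image complex σ(K) are intertwined by the signed relabelling maps: T^{d−1}_σ ∘ B_d^K = B_d^{σ(K)} ∘ T^d_σ as linear maps C_d(K) → C_{d−1}(σ(K)). -/

import Mathlib

open Finset

/-- A simplicial complex on the vertex set `Fin n`: a set of nonempty finsets closed under
taking nonempty subsets. -/
def IsSimplicialCx {n : ℕ} (𝒦 : Set (Finset (Fin n))) : Prop :=
  (∀ s ∈ 𝒦, s.Nonempty) ∧ ∀ s ∈ 𝒦, ∀ t ⊆ s, t.Nonempty → t ∈ 𝒦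

/-- `X_d(𝒦)`: the `d`-simplices of `𝒦`, i.e. the members of `𝒦` of cardinality `d + 1`. -/
abbrev Cell (n d : ℕ) (𝒦 : Set (Finset (Fin n))) : Type :=
  {s : Finset (Fin n) // s ∈ 𝒦 ∧ s.card = d + 1}

noncomputable instance (n d : ℕ) (𝒦 : Set (Finset (Fin n))) : Fintype (Cell n d 𝒦) :=
  Fintype.ofFinite _

/-- The incidence sign `I_e^t`: equals `(-1)^k` if `e = t.erase i_k` where `i_k` is the
`(k+1)`-st smallest element of `t`, and `0` otherwise. -/
noncomputable def isign {n : ℕ} (t e : Finset (Fin n)) : ℤ :=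
  ∑ k : Fin t.card, if e = t.erase (t.orderIsoOfFin rfl k : Fin n) then (-1) ^ (k : ℕ) else 0

/-- The boundary map `B_{d+1} : C_{d+1}(𝒦) → C_d(𝒦)`, `(B x)_e = Σ_t I_e^t x_t`. -/
noncomputable def bMap {n : ℕ} (𝒦 : Set (Finset (Fin n))) (d : ℕ)
    (x : Cell n (d + 1) 𝒦 → ℝ) : Cell n d 𝒦 → ℝ :=
  fun e => ∑ t : Cell n (d + 1) 𝒦, (isign t.1 e.1 : ℝ) * x t

/-- The transpose (adjoint) boundary map `B_{d+1}ᵀ : C_d(𝒦) → C_{d+1}(𝒦)`,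
`(Bᵀ y)_t = Σ_e I_e^t y_e`. -/
noncomputable def bMapT {n : ℕ} (𝒦 : Set (Finset (Fin n))) (d : ℕ)
    (y : Cell n d 𝒦 → ℝ) : Cell n (d + 1) 𝒦 → ℝ :=
  fun t => ∑ e : Cell n d 𝒦, (isign t.1 e.1 : ℝ) * y e

/-- The permutation of `Fin A.card` induced by a permutation `σ` of `Fin n` on a finset `A`:
`k ↦ e_{A.image σ}⁻¹ (σ (e_A k))`, where `e_A` enumerates `A` in increasing order. -/
noncomputable def relPerm {n : ℕ} (σ : Equiv.Perm (Fin n)) (A : Finset (Fin n)) :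
    Equiv.Perm (Fin A.card) :=
  ((A.orderIsoOfFin rfl).toEquiv.trans
      ((σ : Fin n ≃ Fin n).subtypeEquiv (p := (· ∈ A)) (q := (· ∈ A.image ⇑σ))
        (fun a => ⟨fun ha => Finset.mem_image_of_mem σ ha,
          fun h => by
            obtain ⟨a', ha', h'⟩ := Finset.mem_image.mp h
            rwa [← σ.injective h']⟩))).trans
    ((A.image ⇑σ).orderIsoOfFin
      (Finset.card_image_of_injective A σ.injective)).toEquiv.symm

/-- `sgn(A, σ) ∈ {1, -1}`: the sign of the permutation by which `σ` rearranges the elements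
of `A`. -/
noncomputable def sgnA {n : ℕ} (σ : Equiv.Perm (Fin n)) (A : Finset (Fin n)) : ℤ :=
  ((Equiv.Perm.sign (relPerm σ A) : ℤˣ) : ℤ)

/-- The signed relabelling map `T^d_σ : C_d(𝒦) → C_d(σ(𝒦))`, the linear map determined by
`(T^d_σ x)_{A.image σ} = sgn(A, σ) · x_A` for all `A ∈ X_d(𝒦)`. -/
noncomputable def Tmap {n : ℕ} (σ : Equiv.Perm (Fin n)) (𝒦 : Set (Finset (Fin n))) (d : ℕ)
    (x : Cell n d 𝒦 → ℝ) : Cell n d (Finset.image ⇑σ '' 𝒦) → ℝ :=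
  fun s => ∑ A : Cell n d 𝒦, if s.1 = A.1.image ⇑σ then (sgnA σ A.1 : ℝ) * x A else 0

section Aux

open Equiv Equiv.Perm Finset

lemma minor_sign {m : ℕ} (π : Equiv.Perm (Fin (m+1))) (k : Fin (m+1)) (τ : Equiv.Perm (Fin m))
    (hspec : ∀ j : Fin m, π (k.succAbove j) = (π k).succAbove (τ j)) :
    ((Equiv.Perm.sign π : ℤˣ) : ℤ)
      = (-1) ^ ((k : ℕ) + (π k : ℕ)) * ((Equiv.Perm.sign τ : ℤˣ) : ℤ) := by
  have hρ : (Fin.cycleRange (π k)) * π * (Fin.cycleRange k)⁻¹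
      = Equiv.Perm.decomposeFin.symm (0, τ) := by
    ext j
    refine Fin.cases ?_ ?_ j
    · have h0 : (Fin.cycleRange k)⁻¹ 0 = k := by
        conv_lhs => rw [← Fin.cycleRange_self k]
        exact Equiv.symm_apply_apply _ _
      simp [Equiv.Perm.mul_apply, h0, Fin.cycleRange_self]
    · intro i
      have h1 : (Fin.cycleRange k)⁻¹ i.succ = k.succAbove i := by
        conv_lhs => rw [← Fin.cycleRange_succAbove k i]
        exact Equiv.symm_apply_apply _ _
      simp [Equiv.Perm.mul_apply, h1, hspec i, Fin.cycleRange_succAbove]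
  have hsign := congrArg Equiv.Perm.sign hρ
  simp only [map_mul, map_inv, Fin.sign_cycleRange,
    Equiv.Perm.decomposeFin.symm_sign, if_pos rfl, one_mul] at hsign
  have hinv : (((-1 : ℤˣ) ^ (k : ℕ))⁻¹ : ℤˣ) = (-1) ^ (k : ℕ) := by
    rw [← inv_pow]; norm_num
  rw [hinv] at hsign
  have hsign' := congrArg (fun u : ℤˣ => (u : ℤ)) hsign
  push_cast at hsign'
  set s := ((Equiv.Perm.sign π : ℤˣ) : ℤ)
  set t := ((Equiv.Perm.sign τ : ℤˣ) : ℤ)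
  have h1 : ((-1:ℤ)) ^ ((k:ℕ) + (π k : ℕ)) * (-1) ^ ((π k : ℕ)) * (-1) ^ ((k:ℕ)) = 1 := by
    rw [← pow_add, ← pow_add]
    refine Even.neg_one_pow ⟨(k:ℕ) + (π k : ℕ), by ring⟩
  linear_combination (-1:ℤ) ^ ((k:ℕ) + (π k : ℕ)) * hsign' - s * h1

end Aux
lemma orderEmb_erase {n m : ℕ} (t : Finset (Fin n)) (h : t.card = m + 1) (k : Fin (m+1))
    (h' : (t.erase (t.orderEmbOfFin h k)).card = m) (j : Fin m) :
    (t.erase (t.orderEmbOfFin h k)).orderEmbOfFin h' j = t.orderEmbOfFin h (k.succAbove j) := by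
  have hu := Finset.orderEmbOfFin_unique h'
    (f := fun j : Fin m => t.orderEmbOfFin h (k.succAbove j))
    (fun j => Finset.mem_erase.2 ⟨fun hEq =>
        Fin.succAbove_ne k j ((t.orderEmbOfFin h).injective hEq),
      Finset.orderEmbOfFin_mem t h _⟩)
    ((t.orderEmbOfFin h).strictMono.comp (Fin.strictMono_succAbove k))
  exact (congrFun hu j).symm

noncomputable def relPermC {n m : ℕ} (σ : Equiv.Perm (Fin n)) (A : Finset (Fin n))
    (h : A.card = m) : Equiv.Perm (Fin m) :=
  (finCongr h).permCongr (relPerm σ A)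

lemma sgnA_eq {n m : ℕ} (σ : Equiv.Perm (Fin n)) (A : Finset (Fin n)) (h : A.card = m) :
    sgnA σ A = ((Equiv.Perm.sign (relPermC σ A h) : ℤˣ) : ℤ) := by
  rw [sgnA, relPermC, Equiv.Perm.sign_permCongr]

lemma relPerm_spec {n : ℕ} (σ : Equiv.Perm (Fin n)) (A : Finset (Fin n)) (j : Fin A.card) :
    (A.image ⇑σ).orderEmbOfFin (Finset.card_image_of_injective A σ.injective) (relPerm σ A j)
      = σ (A.orderEmbOfFin rfl j) := by
  rw [← Finset.coe_orderIsoOfFin_apply, ← Finset.coe_orderIsoOfFin_apply]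
  simp [relPerm]

lemma relPermC_spec {n m : ℕ} (σ : Equiv.Perm (Fin n)) (A : Finset (Fin n))
    (h : A.card = m) (h2 : (A.image ⇑σ).card = m) (j : Fin m) :
    (A.image ⇑σ).orderEmbOfFin h2 (relPermC σ A h j) = σ (A.orderEmbOfFin h j) := by
  subst h
  simpa [relPermC] using relPerm_spec σ A j
lemma orderEmbOfFin_congr {n : ℕ} {s s' : Finset (Fin n)} (h : s = s') {m : ℕ}
    (hc : s.card = m) : s.orderEmbOfFin hc = s'.orderEmbOfFin (h ▸ hc) := by
  subst h; rfl

lemma sgn_erase {n m : ℕ} (σ : Equiv.Perm (Fin n)) (t : Finset (Fin n))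
    (h : t.card = m + 1) (k : Fin (m+1)) :
    sgnA σ (t.erase (t.orderEmbOfFin h k)) * (-1) ^ (k : ℕ)
      = (-1) ^ ((relPermC σ t h k : ℕ)) * sgnA σ t := by
  set a := t.orderEmbOfFin h k with ha_def
  have ha : a ∈ t := Finset.orderEmbOfFin_mem t h k
  have h' : (t.erase a).card = m := by
    rw [Finset.card_erase_of_mem ha, h]
    simp
  have h2 : (t.image ⇑σ).card = m + 1 := by
    rw [Finset.card_image_of_injective _ σ.injective, h]
  have h2' : ((t.erase a).image ⇑σ).card = m := by
    rw [Finset.card_image_of_injective _ σ.injective, h']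
  set π := relPermC σ t h with hπ
  set τ := relPermC σ (t.erase a) h' with hτ
  have himg : (t.erase a).image ⇑σ = (t.image ⇑σ).erase (σ a) :=
    Finset.image_erase σ.injective t a
  have hπk : (t.image ⇑σ).orderEmbOfFin h2 (π k) = σ a := relPermC_spec σ t h h2 k
  have h2'' : ((t.image ⇑σ).erase ((t.image ⇑σ).orderEmbOfFin h2 (π k))).card = m := by
    rw [hπk, ← himg]; exact h2'
  have hspec : ∀ j : Fin m, π (k.succAbove j) = (π k).succAbove (τ j) := by
    intro j
    apply ((t.image ⇑σ).orderEmbOfFin h2).injective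
    rw [relPermC_spec σ t h h2, ← orderEmb_erase t h k h' j,
      ← relPermC_spec σ (t.erase a) h' h2' j,
      ← orderEmb_erase (t.image ⇑σ) h2 (π k) h2'' (τ j)]
    have hsets : (t.erase a).image ⇑σ
        = (t.image ⇑σ).erase ((t.image ⇑σ).orderEmbOfFin h2 (π k)) := by
      rw [hπk, ← himg]
    exact congrFun (congrArg _ (orderEmbOfFin_congr hsets h2')) (τ j)
  have hm := minor_sign π k τ hspec
  rw [sgnA_eq σ (t.erase a) h', sgnA_eq σ t h, ← hτ, ← hπ, hm, ← mul_assoc]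
  rw [show ((-1:ℤ)) ^ ((π k : ℕ)) * (-1) ^ ((k:ℕ) + (π k : ℕ)) = (-1) ^ (k:ℕ) by
    rw [← pow_add]
    rw [show (π k : ℕ) + ((k:ℕ) + (π k : ℕ)) = (k:ℕ) + 2 * (π k : ℕ) by ring,
      pow_add, pow_mul]
    norm_num]
  ring
lemma isign_apply {n m : ℕ} (t : Finset (Fin n)) (h : t.card = m) (A : Finset (Fin n)) :
    isign t A = ∑ k : Fin m,
      if A = t.erase (t.orderEmbOfFin h k) then (-1) ^ (k : ℕ) else 0 := by
  subst h
  simp only [isign, Finset.coe_orderIsoOfFin_apply]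
  rfl

lemma erase_emb_inj {n m : ℕ} (t : Finset (Fin n)) (h : t.card = m) {k j : Fin m}
    (hEq : t.erase (t.orderEmbOfFin h k) = t.erase (t.orderEmbOfFin h j)) : k = j :=
  (t.orderEmbOfFin h).injective
    ((Finset.erase_inj t (Finset.orderEmbOfFin_mem t h k)).1 hEq)

lemma isign_erase {n m : ℕ} (t : Finset (Fin n)) (h : t.card = m) (k : Fin m) :
    isign t (t.erase (t.orderEmbOfFin h k)) = (-1) ^ (k : ℕ) := by
  rw [isign_apply t h]
  rw [Finset.sum_eq_single k]
  · rw [if_pos rfl]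
  · intro j _ hjk
    exact if_neg fun hc => hjk (erase_emb_inj t h hc).symm
  · intro hk; exact absurd (Finset.mem_univ k) hk

lemma isign_zero {n m : ℕ} (t : Finset (Fin n)) (h : t.card = m) (A : Finset (Fin n))
    (hA : ∀ k : Fin m, A ≠ t.erase (t.orderEmbOfFin h k)) : isign t A = 0 := by
  rw [isign_apply t h]
  exact Finset.sum_eq_zero fun k _ => if_neg (hA k)

lemma key_identity {n m : ℕ} (σ : Equiv.Perm (Fin n)) (t A : Finset (Fin n))
    (ht : t.card = m + 1) :
    sgnA σ A * isign t A = isign (t.image ⇑σ) (A.image ⇑σ) * sgnA σ t := by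
  have h2 : (t.image ⇑σ).card = m + 1 := by
    rw [Finset.card_image_of_injective _ σ.injective, ht]
  by_cases hex : ∃ k : Fin (m+1), A = t.erase (t.orderEmbOfFin ht k)
  · obtain ⟨k, rfl⟩ := hex
    rw [isign_erase t ht k]
    have himg : (t.erase (t.orderEmbOfFin ht k)).image ⇑σ
        = (t.image ⇑σ).erase ((t.image ⇑σ).orderEmbOfFin h2 (relPermC σ t ht k)) := by
      rw [relPermC_spec σ t ht h2 k]
      exact Finset.image_erase σ.injective t _
    rw [himg, isign_erase (t.image ⇑σ) h2 (relPermC σ t ht k)]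
    exact sgn_erase σ t ht k
  · push_neg at hex
    rw [isign_zero t ht A hex, isign_zero (t.image ⇑σ) h2 (A.image ⇑σ) ?_, mul_zero, zero_mul]
    intro k'' hEq
    set j := (relPermC σ t ht).symm k'' with hj
    have hk'' : (t.image ⇑σ).orderEmbOfFin h2 k'' = σ (t.orderEmbOfFin ht j) := by
      rw [← relPermC_spec σ t ht h2 j, hj, Equiv.apply_symm_apply]
    rw [hk'', ← Finset.image_erase σ.injective] at hEq
    exact hex j (Finset.image_injective σ.injective hEq)
/-- **Intertwining of boundary maps under relabelling.**  For a simplicial complex `𝒦` on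
`Fin n`, a permutation `σ` of the vertices, and any `d ≥ 1` (written `d = e + 1`):
`T^{d-1}_σ ∘ B_d^𝒦 = B_d^{σ(𝒦)} ∘ T^d_σ` as maps `C_d(𝒦) → C_{d-1}(σ(𝒦))`. -/
theorem Tmap_boundary_intertwine {n : ℕ} (𝒦 : Set (Finset (Fin n)))
    (hK : IsSimplicialCx 𝒦) (σ : Equiv.Perm (Fin n)) (e : ℕ)
    (x : Cell n (e + 1) 𝒦 → ℝ) :
    Tmap σ 𝒦 e (bMap 𝒦 e x) = bMap (Finset.image ⇑σ '' 𝒦) e (Tmap σ 𝒦 (e + 1) x) := by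
  funext s
  obtain ⟨A, hA𝒦, hAs⟩ := s.2.1
  have hAcard : A.card = e + 1 := by
    have hc := s.2.2
    rw [← hAs, Finset.card_image_of_injective _ σ.injective] at hc
    exact hc
  have hcond : ∀ A' : Cell n e 𝒦,
      (s.1 = A'.1.image ⇑σ) ↔ (A' = (⟨A, hA𝒦, hAcard⟩ : Cell n e 𝒦)) := by
    intro A'
    constructor
    · intro hh
      exact Subtype.ext (Finset.image_injective σ.injective (by rw [← hh, hAs]))
    · intro hh; rw [hh]; exact hAs.symm
  have hRHS : ∀ B : Cell n (e+1) 𝒦,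
      (∑ T : Cell n (e+1) (Finset.image ⇑σ '' 𝒦),
        (isign T.1 s.1 : ℝ) * (if T.1 = B.1.image ⇑σ then (sgnA σ B.1 : ℝ) * x B else 0))
      = (isign (B.1.image ⇑σ) s.1 : ℝ) * ((sgnA σ B.1 : ℝ) * x B) := by
    intro B
    have hmem : B.1.image ⇑σ ∈ Finset.image ⇑σ '' 𝒦 := ⟨B.1, B.2.1, rfl⟩
    have hcard : (B.1.image ⇑σ).card = (e + 1) + 1 := by
      rw [Finset.card_image_of_injective _ σ.injective, B.2.2]
    set Tc : Cell n (e+1) (Finset.image ⇑σ '' 𝒦) := ⟨B.1.image ⇑σ, hmem, hcard⟩ with hTc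
    have hcond2 : ∀ T : Cell n (e+1) (Finset.image ⇑σ '' 𝒦),
        (T.1 = B.1.image ⇑σ) ↔ (T = Tc) := fun T => by
      rw [hTc, Subtype.ext_iff]
    simp only [mul_ite, mul_zero, hcond2]
    rw [Finset.sum_ite_eq' Finset.univ Tc
      (fun T => (isign T.1 s.1 : ℝ) * ((sgnA σ B.1 : ℝ) * x B))]
    simp [hTc]
  simp only [Tmap, bMap, hcond]
  rw [Finset.sum_ite_eq' Finset.univ (⟨A, hA𝒦, hAcard⟩ : Cell n e 𝒦)]
  simp only [Finset.mem_univ, if_true, Finset.mul_sum]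
  rw [Finset.sum_comm]
  refine Finset.sum_congr rfl fun B _ => ?_
  rw [hRHS B, ← hAs]
  have hk := key_identity σ B.1 A B.2.2
  have hkR := congrArg (fun z : ℤ => (z : ℝ)) hk
  push_cast at hkR
  rw [← mul_assoc, ← mul_assoc, hkR]
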